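/- Let n ≥ 1, let D ⊆ ℂ be open and connected, and let 𝔓 : D → Matrix n n ℂ be holomorphic (entrywise) with 𝔓(σ₁) invertible for some σ₁ ∈ D. Then the set Z = {σ ∈ D : 𝔓(σ) is not invertible} is a discrete subset of ℂ and is closed in D, and the pointwise inverse is meromorphic: for every σ' ∈ Z there exist m ∈ ℕ and ρ > 0 such that the function σ ↦ (σ − σ')^m · 𝔓(σ)⁻¹, defined for σ ∈ B(σ',ρ) ∖ {σ'}, extends to a holomorphic Matrix n n ℂ–valued function on B(σ',ρ). -/

import Mathlib

open Metric Set Complex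

noncomputable section

/-- A principal part at `c ∈ ℂ` with values in a complex vector space `E`:
`φ(σ) = ∑_{k=1}^m a_k (σ - c)^{-k}` (with the convention that the value at the pole is `0`,
coming from `0⁻¹ = 0` in Lean; for `σ ≠ c` this is exactly the usual formula). -/
def IsPrincipalPart {E : Type*} [AddCommGroup E] [Module ℂ E] (c : ℂ) (φ : ℂ → E) : Prop :=
  ∃ (m : ℕ) (a : ℕ → E), ∀ σ : ℂ, φ σ = ∑ k ∈ Finset.Icc 1 m, ((σ - c) ^ (-(k : ℤ))) • a k

/-- A singular function with poles in `S ⊆ ℂ`: a finite sum of principal parts at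
finitely many points of `S`. -/
def IsSingularFunction {E : Type*} [AddCommGroup E] [Module ℂ E] (S : Set ℂ) (φ : ℂ → E) :
    Prop :=
  ∃ (F : Finset ℂ) (p : ℂ → ℂ → E), (↑F : Set ℂ) ⊆ S ∧ (∀ c ∈ F, IsPrincipalPart c (p c)) ∧
    ∀ σ : ℂ, φ σ = ∑ c ∈ F, p c σ

/-- The space `𝒦` of singular functions `φ` with poles in `Ω` such that `σ ↦ P σ (φ σ)`
agrees, off a finite set (the poles of `φ`), with a function holomorphic on all of `Ω`. -/
def kernelSpace {𝒟 H : Type*} [NormedAddCommGroup 𝒟] [NormedSpace ℂ 𝒟]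
    [NormedAddCommGroup H] [NormedSpace ℂ H]
    (Ω : Set ℂ) (P : ℂ → (𝒟 →L[ℂ] H)) : Set (ℂ → 𝒟) :=
  {φ | IsSingularFunction Ω φ ∧ ∃ g : ℂ → H, DifferentiableOn ℂ g Ω ∧
    ∃ F : Set ℂ, F.Finite ∧ ∀ σ ∈ Ω \ F, P σ (φ σ) = g σ}

/-- The local kernel space `𝔎(𝔓, S)` of a holomorphic family of `n × n` matrices on `D`:
singular functions `φ : ℂ → ℂⁿ` with poles in `S` such that `σ ↦ 𝔓(σ) · φ(σ)` agrees,
off a finite set (the poles of `φ`), with a function holomorphic on all of `D`. -/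
def matKernelSpace {n : ℕ} (D : Set ℂ) (P : ℂ → Matrix (Fin n) (Fin n) ℂ) (S : Set ℂ) :
    Set (ℂ → (Fin n → ℂ)) :=
  {φ | IsSingularFunction S φ ∧ ∃ g : ℂ → (Fin n → ℂ),
    (∀ i, DifferentiableOn ℂ (fun σ => g σ i) D) ∧
    ∃ F : Set ℂ, F.Finite ∧ ∀ σ ∈ D \ F, (P σ).mulVec (φ σ) = g σ}

/-- A subset `K` of a complex vector space (in practice a linear subspace) has a basis of
cardinality `d`: there are `d` elements of `K` that are linearly independent and span `K`. -/
def HasBasisOfCard {E : Type*} [AddCommGroup E] [Module ℂ E] (K : Set E) (d : ℕ) : Prop :=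
  ∃ φ : Fin d → E, (∀ i, φ i ∈ K) ∧ LinearIndependent ℂ φ ∧
    ∀ ψ ∈ K, ψ ∈ Submodule.span ℂ (Set.range φ)

/-- A bounded operator is Fredholm of index `0`: finite-dimensional kernel, closed range,
finite-dimensional cokernel, and `dim ker = dim coker`. -/
def FredholmIndexZero {𝒟 H : Type*} [NormedAddCommGroup 𝒟] [NormedSpace ℂ 𝒟]
    [NormedAddCommGroup H] [NormedSpace ℂ H] (T : 𝒟 →L[ℂ] H) : Prop :=
  FiniteDimensional ℂ (LinearMap.ker (T : 𝒟 →ₗ[ℂ] H)) ∧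
    IsClosed (LinearMap.range (T : 𝒟 →ₗ[ℂ] H) : Set H) ∧
    FiniteDimensional ℂ (H ⧸ LinearMap.range (T : 𝒟 →ₗ[ℂ] H)) ∧
    Module.finrank ℂ (LinearMap.ker (T : 𝒟 →ₗ[ℂ] H)) = Module.finrank ℂ (H ⧸ LinearMap.range (T : 𝒟 →ₗ[ℂ] H))

lemma detDiffOn {N : ℕ} {s : Set ℂ} (M : ℂ → Matrix (Fin N) (Fin N) ℂ)
    (h : ∀ i j, DifferentiableOn ℂ (fun σ => M σ i j) s) :
    DifferentiableOn ℂ (fun σ => (M σ).det) s := by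
  simp only [Matrix.det_apply']
  exact DifferentiableOn.fun_sum fun p _ =>
    (DifferentiableOn.fun_finset_prod fun i _ => h (p i) i).const_mul _

lemma adjDiffOn {N : ℕ} {s : Set ℂ} (M : ℂ → Matrix (Fin N) (Fin N) ℂ)
    (h : ∀ i j, DifferentiableOn ℂ (fun σ => M σ i j) s) (i j : Fin N) :
    DifferentiableOn ℂ (fun σ => (M σ).adjugate i j) s := by
  simp only [Matrix.adjugate_apply]
  apply detDiffOn
  intro k l
  by_cases hk : k = j
  · simp [Matrix.updateRow_apply, hk]
  · simp only [Matrix.updateRow_apply, hk, if_false]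
    exact h k l

/-- for a holomorphic matrix family invertible somewhere on a connected open set,
the noninvertibility set is discrete and closed in `D`, and the inverse is meromorphic. -/
theorem statement8 (n : ℕ) (hn : 1 ≤ n) (D : Set ℂ) (hD : IsOpen D) (hDconn : IsConnected D)
    (𝔓 : ℂ → Matrix (Fin n) (Fin n) ℂ)
    (hholo : ∀ i j, DifferentiableOn ℂ (fun σ => 𝔓 σ i j) D)
    (σ₁ : ℂ) (hσ₁ : σ₁ ∈ D) (hinv : IsUnit (𝔓 σ₁)) :
    (∀ z ∈ {σ ∈ D | ¬ IsUnit (𝔓 σ)}, ∃ V ∈ nhds z,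
      V ∩ {σ ∈ D | ¬ IsUnit (𝔓 σ)} = {z}) ∧
    closure {σ ∈ D | ¬ IsUnit (𝔓 σ)} ∩ D ⊆ {σ ∈ D | ¬ IsUnit (𝔓 σ)} ∧
    ∀ σ' ∈ {σ ∈ D | ¬ IsUnit (𝔓 σ)}, ∃ (m : ℕ) (ρ : ℝ), 0 < ρ ∧ ball σ' ρ ⊆ D ∧
      ∃ g : ℂ → Matrix (Fin n) (Fin n) ℂ,
        (∀ i j, DifferentiableOn ℂ (fun σ => g σ i j) (ball σ' ρ)) ∧
        ∀ σ ∈ ball σ' ρ \ {σ'}, g σ = (σ - σ') ^ m • (𝔓 σ)⁻¹ := by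
  set f : ℂ → ℂ := fun σ => (𝔓 σ).det with hf
  have hfd : DifferentiableOn ℂ f D := detDiffOn 𝔓 hholo
  have hfa : AnalyticOnNhd ℂ f D := hfd.analyticOnNhd hD
  have key : ∀ σ : ℂ, ¬ IsUnit (𝔓 σ) ↔ f σ = 0 := by
    intro σ
    rw [Matrix.isUnit_iff_isUnit_det, isUnit_iff_ne_zero, not_not]
  have hne1 : f σ₁ ≠ 0 := by
    intro h; exact ((key σ₁).mpr h) hinv
  have hnotev : ∀ z ∈ D, ¬ (f =ᶠ[nhds z] 0) := by
    intro z hz hev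
    exact hne1 (hfa.eqOn_zero_of_preconnected_of_eventuallyEq_zero
      hDconn.isPreconnected hz hev hσ₁)
  have hZsub : ∀ z ∈ {σ ∈ D | ¬ IsUnit (𝔓 σ)}, f z = 0 := fun z hz => (key z).mp hz.2
  have hiso : ∀ z ∈ D, ∀ᶠ w in nhds z, w ≠ z → f w ≠ 0 := by
    intro z hz
    have := (hfa z hz).eventually_eq_zero_or_eventually_ne_zero.resolve_left (hnotev z hz)
    rw [eventually_nhdsWithin_iff] at this
    filter_upwards [this] with w hw hwz using hw hwz
  refine ⟨?_, ?_, ?_⟩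
  · intro z hz
    have hD' : D ∈ nhds z := hD.mem_nhds hz.1
    refine ⟨{w | w ≠ z → f w ≠ 0} ∩ D, Filter.inter_mem (hiso z hz.1) hD', ?_⟩
    ext w
    simp only [mem_inter_iff, mem_setOf_eq, mem_singleton_iff]
    constructor
    · rintro ⟨⟨hw, _⟩, hwD, hwu⟩
      by_contra hwz
      exact hw hwz ((key w).mp hwu)
    · rintro rfl
      exact ⟨⟨fun h => absurd rfl h, hz.1⟩, hz⟩
  · rintro x ⟨hxc, hxD⟩
    have hca : ContinuousAt f x :=
      (hfd.differentiableAt (hD.mem_nhds hxD)).continuousAt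
    have hmem : f x ∈ closure (f '' {σ ∈ D | ¬ IsUnit (𝔓 σ)}) :=
      hca.continuousWithinAt.mem_closure_image hxc
    have himg : f '' {σ ∈ D | ¬ IsUnit (𝔓 σ)} ⊆ {0} := by
      rintro - ⟨w, hw, rfl⟩
      exact hZsub w hw
    have : f x = 0 := by
      have := closure_mono himg hmem
      simpa using this
    exact ⟨hxD, (key x).mpr this⟩
  · intro σ' hσ'
    have ha : AnalyticAt ℂ f σ' := hfa σ' hσ'.1
    have hordne : analyticOrderAt f σ' ≠ ⊤ :=
      fun htop => hnotev σ' hσ'.1 (analyticOrderAt_eq_top.mp htop)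
    obtain ⟨m, hm⟩ := WithTop.ne_top_iff_exists.mp hordne
    obtain ⟨h, hha, hh0, hfac⟩ := (ha.analyticOrderAt_eq_natCast (n := m)).mp hm.symm
    have hhev : ∀ᶠ w in nhds σ', AnalyticAt ℂ h w := hha.eventually_analyticAt
    have hall : ∀ᶠ w in nhds σ',
        AnalyticAt ℂ h w ∧ f w = (w - σ') ^ m • h w ∧ (w ≠ σ' → f w ≠ 0) ∧ w ∈ D :=
      hhev.and (hfac.and ((hiso σ' hσ'.1).and (hD.mem_nhds hσ'.1)))
    obtain ⟨ρ, hρ, hball⟩ := Metric.eventually_nhds_iff_ball.mp hall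
    have hhne : ∀ σ ∈ ball σ' ρ, h σ ≠ 0 := by
      intro σ hσ
      obtain ⟨_, hfacσ, hisoσ, _⟩ := hball σ hσ
      by_cases hσσ' : σ = σ'
      · subst hσσ'; exact hh0
      · intro h0
        apply hisoσ hσσ'
        rw [hfacσ, h0, smul_zero]
    refine ⟨m, ρ, hρ, fun σ hσ => (hball σ hσ).2.2.2, fun σ => (h σ)⁻¹ • (𝔓 σ).adjugate,
      ?_, ?_⟩
    · intro i j
      have hinvd : DifferentiableOn ℂ (fun σ => (h σ)⁻¹) (ball σ' ρ) := by
        intro σ hσ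
        exact (((hball σ hσ).1.differentiableAt).differentiableWithinAt).inv (hhne σ hσ)
      have hadj : DifferentiableOn ℂ (fun σ => (𝔓 σ).adjugate i j) (ball σ' ρ) :=
        (adjDiffOn 𝔓 hholo i j).mono fun σ hσ => (hball σ hσ).2.2.2
      simpa [Matrix.smul_apply, smul_eq_mul] using hinvd.fun_mul hadj
    · rintro σ ⟨hσ, hσne⟩
      have hσne' : σ ≠ σ' := hσne
      obtain ⟨_, hfacσ, hisoσ, _⟩ := hball σ hσ
      have hfσ : f σ ≠ 0 := hisoσ hσne'
      have hud : IsUnit (𝔓 σ).det := isUnit_iff_ne_zero.mpr hfσ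
      rw [Matrix.inv_def, Ring.inverse_eq_inv, smul_smul]
      congr 1
      have hpow : (σ - σ') ^ m ≠ 0 := pow_ne_zero _ (sub_ne_zero.mpr hσne')
      have hhσ : h σ ≠ 0 := hhne σ hσ
      rw [show (𝔓 σ).det = f σ from rfl, hfacσ, smul_eq_mul, mul_inv,
        ← mul_assoc, mul_inv_cancel₀ hpow, one_mul]
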